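/- Let k be an infinite field and let h_1, h_2, h_3 be linearly independent homogeneous polynomials of degree 3 in k[x_1,x_2] with no common (nonconstant) factor. Then x_1(h_1,h_2,h_3) + x_2(h_1,h_2,h_3) spans the full 5-dimensional space of homogeneous degree-4 polynomials in k[x_1,x_2]; equivalently, (x_1,x_2)(h_1,h_2,h_3) = (x_1,x_2)^4 in degree 4. -/

import Mathlib

open MvPolynomial

noncomputable def ee (n j : ℕ) : Fin 2 →₀ ℕ :=
  Finsupp.single 0 (n - j) + Finsupp.single 1 j

lemma ee_apply0 (n j : ℕ) : ee n j 0 = n - j := by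
  simp [ee, Finsupp.single_apply]

lemma ee_apply1 (n j : ℕ) : ee n j 1 = j := by
  simp [ee, Finsupp.single_apply]

lemma degree_two (d : Fin 2 →₀ ℕ) : d.degree = d 0 + d 1 := by
  rw [Finsupp.degree_apply, Finset.sum_subset (Finset.subset_univ d.support)
    (fun i _ hi => Finsupp.notMem_support_iff.mp hi), Fin.sum_univ_two]

section
variable {k : Type*} [Field k]

lemma rep {n : ℕ} {p : MvPolynomial (Fin 2) k} (hp : p.IsHomogeneous n) :
    p = ∑ j ∈ Finset.range (n + 1), monomial (ee n j) (coeff (ee n j) p) := by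
  ext d
  rw [coeff_sum]
  by_cases hd : coeff d p = 0
  · rw [hd, eq_comm]
    refine Finset.sum_eq_zero fun j _ => ?_
    rw [coeff_monomial]
    split_ifs with hj
    · rw [hj, hd]
    · rfl
  · have hdd : d 0 + d 1 = n := by
      by_contra hne
      exact hd (hp.coeff_eq_zero (by rw [degree_two]; exact hne))
    have key : ∀ j, ee n j = d ↔ j = d 1 := by
      intro j
      constructor
      · intro hc; rw [← hc]; exact (ee_apply1 n j).symm
      · rintro rfl
        ext i
        match i with
        | 0 => rw [ee_apply0]; omega
        | 1 => rw [ee_apply1]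
    rw [eq_comm]
    calc ∑ j ∈ Finset.range (n + 1), coeff d ((monomial (ee n j)) (coeff (ee n j) p))
        = ∑ j ∈ Finset.range (n + 1), if j = d 1 then coeff (ee n j) p else 0 := by
          refine Finset.sum_congr rfl fun j _ => ?_
          rw [coeff_monomial, if_congr (key j) rfl rfl]
      _ = coeff d p := by
          rw [Finset.sum_ite_eq' (Finset.range (n + 1)) (d 1) fun j => coeff (ee n j) p,
            if_pos (Finset.mem_range.mpr (by omega)), (key (d 1)).mpr rfl]

lemma mon_eq (m j : ℕ) (c : k) :
    (monomial (Finsupp.single 0 m + Finsupp.single 1 j) c : MvPolynomial (Fin 2) k) =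
      C c * X 0 ^ m * X 1 ^ j := by
  rw [X_pow_eq_monomial, X_pow_eq_monomial, C_apply, monomial_mul, monomial_mul,
    zero_add, mul_one, mul_one]

lemma rep3 {p : MvPolynomial (Fin 2) k} (hp : p.IsHomogeneous 3) :
    p = C (coeff (ee 3 0) p) * X 0 ^ 3 + C (coeff (ee 3 1) p) * X 0 ^ 2 * X 1 +
        C (coeff (ee 3 2) p) * X 0 * X 1 ^ 2 + C (coeff (ee 3 3) p) * X 1 ^ 3 := by
  conv_lhs => rw [rep hp]
  rw [show (3 : ℕ) + 1 = 4 from rfl, Finset.sum_range_succ, Finset.sum_range_succ,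
    Finset.sum_range_succ, Finset.sum_range_succ, Finset.sum_range_zero, zero_add]
  rw [show ee 3 0 = Finsupp.single 0 3 + Finsupp.single 1 0 from rfl,
    show ee 3 1 = Finsupp.single 0 2 + Finsupp.single 1 1 from rfl,
    show ee 3 2 = Finsupp.single 0 1 + Finsupp.single 1 2 from rfl,
    show ee 3 3 = Finsupp.single 0 0 + Finsupp.single 1 3 from rfl,
    mon_eq, mon_eq, mon_eq, mon_eq]
  ring

lemma dvd_X0 {p : MvPolynomial (Fin 2) k} (hp : p.IsHomogeneous 3)
    (h3 : coeff (ee 3 3) p = 0) : (X 0 : MvPolynomial (Fin 2) k) ∣ p := by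
  refine ⟨C (coeff (ee 3 0) p) * X 0 ^ 2 + C (coeff (ee 3 1) p) * X 0 * X 1 +
    C (coeff (ee 3 2) p) * X 1 ^ 2, ?_⟩
  have hC : (C (coeff (ee 3 3) p) : MvPolynomial (Fin 2) k) = 0 := by rw [h3, map_zero]
  nth_rewrite 1 [rep3 hp]
  linear_combination hC * (X 1 : MvPolynomial (Fin 2) k) ^ 3

lemma dvd_X1 {p : MvPolynomial (Fin 2) k} (hp : p.IsHomogeneous 3)
    (h0 : coeff (ee 3 0) p = 0) : (X 1 : MvPolynomial (Fin 2) k) ∣ p := by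
  refine ⟨C (coeff (ee 3 1) p) * X 0 ^ 2 + C (coeff (ee 3 2) p) * X 0 * X 1 +
    C (coeff (ee 3 3) p) * X 1 ^ 2, ?_⟩
  have hC : (C (coeff (ee 3 0) p) : MvPolynomial (Fin 2) k) = 0 := by rw [h0, map_zero]
  nth_rewrite 1 [rep3 hp]
  linear_combination hC * (X 0 : MvPolynomial (Fin 2) k) ^ 3

lemma dvd_lin {p : MvPolynomial (Fin 2) k} (hp : p.IsHomogeneous 3) (t : k)
    (hrel : coeff (ee 3 0) p + t * coeff (ee 3 1) p + t ^ 2 * coeff (ee 3 2) p +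
      t ^ 3 * coeff (ee 3 3) p = 0) :
    (X 1 - C t * X 0 : MvPolynomial (Fin 2) k) ∣ p := by
  refine ⟨(C (coeff (ee 3 1) p) + C t * C (coeff (ee 3 2) p) +
      C t ^ 2 * C (coeff (ee 3 3) p)) * X 0 ^ 2 +
    (C (coeff (ee 3 2) p) + C t * C (coeff (ee 3 3) p)) * X 0 * X 1 +
    C (coeff (ee 3 3) p) * X 1 ^ 2, ?_⟩
  have hC := congrArg (C : k → MvPolynomial (Fin 2) k) hrel
  simp only [map_add, map_mul, map_pow, map_zero] at hC
  nth_rewrite 1 [rep3 hp]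
  linear_combination hC * (X 0 : MvPolynomial (Fin 2) k) ^ 3

lemma not_unit_X0 : ¬ IsUnit (X 0 : MvPolynomial (Fin 2) k) := fun hu =>
  Polynomial.not_isUnit_X (R := k)
    (by simpa using hu.map (aeval (fun i : Fin 2 => if i = 0 then Polynomial.X else (1 : Polynomial k))))

lemma not_unit_X1 : ¬ IsUnit (X 1 : MvPolynomial (Fin 2) k) := fun hu =>
  Polynomial.not_isUnit_X (R := k)
    (by simpa using hu.map (aeval (fun i : Fin 2 => if i = 0 then (1 : Polynomial k) else Polynomial.X)))

lemma not_unit_lin (t : k) : ¬ IsUnit (X 1 - C t * X 0 : MvPolynomial (Fin 2) k) := fun hu =>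
  Polynomial.not_isUnit_X_sub_C t
    (by simpa [Polynomial.algebraMap_eq] using
      hu.map (aeval (fun i : Fin 2 => if i = 0 then (1 : Polynomial k) else Polynomial.X)))

end

theorem stmt10 {k : Type*} [Field k] [Infinite k]
    (h : Fin 3 → MvPolynomial (Fin 2) k)
    (hdeg : ∀ i, (h i).IsHomogeneous 3)
    (hli : LinearIndependent k h)
    (hgcd : ∀ p : MvPolynomial (Fin 2) k, (∀ i, p ∣ h i) → IsUnit p) :
    Submodule.map (LinearMap.mulLeft k (X 0 : MvPolynomial (Fin 2) k))
        (Submodule.span k (Set.range h)) ⊔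
      Submodule.map (LinearMap.mulLeft k (X 1 : MvPolynomial (Fin 2) k))
        (Submodule.span k (Set.range h)) =
      homogeneousSubmodule (Fin 2) k 4 := by
  classical
  set W := Submodule.map (LinearMap.mulLeft k (X 0 : MvPolynomial (Fin 2) k))
        (Submodule.span k (Set.range h)) ⊔
      Submodule.map (LinearMap.mulLeft k (X 1 : MvPolynomial (Fin 2) k))
        (Submodule.span k (Set.range h)) with hWdef
  have hWle : W ≤ homogeneousSubmodule (Fin 2) k 4 := by
    rw [hWdef]
    apply sup_le
    · rw [Submodule.map_span, Submodule.span_le]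
      rintro _ ⟨_, ⟨i, rfl⟩, rfl⟩
      exact (mem_homogeneousSubmodule _ _).mpr
        (by simpa [LinearMap.mulLeft_apply] using (isHomogeneous_X k 0).mul (hdeg i))
    · rw [Submodule.map_span, Submodule.span_le]
      rintro _ ⟨_, ⟨i, rfl⟩, rfl⟩
      exact (mem_homogeneousSubmodule _ _).mpr
        (by simpa [LinearMap.mulLeft_apply] using (isHomogeneous_X k 1).mul (hdeg i))
  refine le_antisymm hWle ?_
  intro p hp
  by_contra hpW
  -- finite dimensionality of the degree 4 component
  haveI hfd5 := FiniteDimensional.span_of_finite k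
    (Set.finite_range fun j : Fin 5 => (monomial (ee 4 (j : ℕ)) (1 : k) : MvPolynomial (Fin 2) k))
  haveI : FiniteDimensional k (homogeneousSubmodule (Fin 2) k 4) := by
    refine Submodule.finiteDimensional_of_le (S₂ := Submodule.span k
      (Set.range fun j : Fin 5 => (monomial (ee 4 (j : ℕ)) (1 : k) : MvPolynomial (Fin 2) k))) ?_
    intro r hr
    rw [rep ((mem_homogeneousSubmodule _ _).mp hr)]
    refine Submodule.sum_mem _ fun j hj => ?_
    rw [show (monomial (ee 4 j)) (coeff (ee 4 j) r) = coeff (ee 4 j) r • monomial (ee 4 j) (1 : k)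
      by rw [smul_monomial, smul_eq_mul, mul_one]]
    exact Submodule.smul_mem _ _
      (Submodule.subset_span ⟨⟨j, Finset.mem_range.mp hj⟩, rfl⟩)
  -- a dual functional separating p from W
  set W' : Submodule k (homogeneousSubmodule (Fin 2) k 4) :=
    W.comap (homogeneousSubmodule (Fin 2) k 4).subtype with hW'def
  obtain ⟨g, hg⟩ : ∃ g : Module.Dual k ((homogeneousSubmodule (Fin 2) k 4) ⧸ W'),
      g (W'.mkQ ⟨p, hp⟩) ≠ 0 := by
    by_contra hc
    push_neg at hc
    have h0 := (Module.forall_dual_apply_eq_zero_iff k (W'.mkQ ⟨p, hp⟩)).mp hc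
    rw [Submodule.mkQ_apply, Submodule.Quotient.mk_eq_zero] at h0
    exact hpW h0
  set F : MvPolynomial (Fin 2) k →ₗ[k] k :=
    g ∘ₗ W'.mkQ ∘ₗ (LinearMap.codRestrict (homogeneousSubmodule (Fin 2) k 4)
      (homogeneousComponent 4) fun x => homogeneousComponent_mem 4 x) with hFdef
  have hF4 : ∀ r (hr : r ∈ homogeneousSubmodule (Fin 2) k 4),
      F r = g (W'.mkQ ⟨r, hr⟩) := by
    intro r hr
    have harg : (LinearMap.codRestrict (homogeneousSubmodule (Fin 2) k 4)
        (homogeneousComponent 4) fun x => homogeneousComponent_mem 4 x) r = ⟨r, hr⟩ := by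
      apply Subtype.ext
      rw [LinearMap.codRestrict_apply]
      rw [homogeneousComponent_of_mem hr, if_pos rfl]
    rw [hFdef]
    simp only [LinearMap.comp_apply]
    rw [harg]
  have hFW : ∀ r, r ∈ W → F r = 0 := by
    intro r hr
    rw [hF4 r (hWle hr)]
    have hz : W'.mkQ ⟨r, hWle hr⟩ = 0 := by
      rw [Submodule.mkQ_apply, Submodule.Quotient.mk_eq_zero]
      exact hr
    rw [hz, map_zero]
  have hFp : F p ≠ 0 := by rw [hF4 p hp]; exact hg
  -- the two families of linear relations
  have hXmon : ∀ (x : Fin 2) (s : Fin 2 →₀ ℕ) (c : k),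
      X x * monomial s c = monomial (Finsupp.single x 1 + s) c := by
    intro x s c
    rw [← pow_one (X x : MvPolynomial (Fin 2) k), X_pow_eq_monomial, monomial_mul, one_mul]
  have he0 : ∀ j : ℕ, j ≤ 3 → Finsupp.single (0 : Fin 2) 1 + ee 3 j = ee 4 j := by
    intro j hj
    ext x
    match x with
    | 0 =>
      rw [Finsupp.add_apply, Finsupp.single_eq_same, ee_apply0, ee_apply0]
      omega
    | 1 =>
      rw [Finsupp.add_apply, Finsupp.single_eq_of_ne (by decide), ee_apply1, ee_apply1]
      omega
  have he1 : ∀ j : ℕ, Finsupp.single (1 : Fin 2) 1 + ee 3 j = ee 4 (j + 1) := by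
    intro j
    ext x
    match x with
    | 0 =>
      rw [Finsupp.add_apply, Finsupp.single_eq_of_ne (by decide), ee_apply0, ee_apply0]
      omega
    | 1 =>
      rw [Finsupp.add_apply, Finsupp.single_eq_same, ee_apply1, ee_apply1]
      omega
  have hsum0 : ∀ i, ∑ j ∈ Finset.range 4,
      coeff (ee 3 j) (h i) * F (monomial (ee 4 j) (1 : k)) = 0 := by
    intro i
    have hmem : X 0 * h i ∈ W := by
      rw [hWdef]
      exact Submodule.mem_sup_left
        (Submodule.mem_map_of_mem (Submodule.subset_span ⟨i, rfl⟩))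
    have hc := hFW _ hmem
    have hrw : X 0 * h i = ∑ j ∈ Finset.range 4,
        (monomial (ee 4 j)) (coeff (ee 3 j) (h i)) := by
      nth_rewrite 1 [rep (hdeg i)]
      rw [Finset.mul_sum]
      refine Finset.sum_congr rfl fun j hj => ?_
      rw [hXmon, he0 j (by have := Finset.mem_range.mp hj; omega)]
    rw [hrw, map_sum] at hc
    rw [← hc]
    refine Finset.sum_congr rfl fun j hj => ?_
    rw [show (monomial (ee 4 j)) (coeff (ee 3 j) (h i)) =
        coeff (ee 3 j) (h i) • monomial (ee 4 j) (1 : k)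
      by rw [smul_monomial, smul_eq_mul, mul_one], map_smul, smul_eq_mul]
  have hsum1 : ∀ i, ∑ j ∈ Finset.range 4,
      coeff (ee 3 j) (h i) * F (monomial (ee 4 (j + 1)) (1 : k)) = 0 := by
    intro i
    have hmem : X 1 * h i ∈ W := by
      rw [hWdef]
      exact Submodule.mem_sup_right
        (Submodule.mem_map_of_mem (Submodule.subset_span ⟨i, rfl⟩))
    have hc := hFW _ hmem
    have hrw : X 1 * h i = ∑ j ∈ Finset.range 4,
        (monomial (ee 4 (j + 1))) (coeff (ee 3 j) (h i)) := by
      nth_rewrite 1 [rep (hdeg i)]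
      rw [Finset.mul_sum]
      refine Finset.sum_congr rfl fun j hj => ?_
      rw [hXmon, he1 j]
    rw [hrw, map_sum] at hc
    rw [← hc]
    refine Finset.sum_congr rfl fun j hj => ?_
    rw [show (monomial (ee 4 (j + 1))) (coeff (ee 3 j) (h i)) =
        coeff (ee 3 j) (h i) • monomial (ee 4 (j + 1)) (1 : k)
      by rw [smul_monomial, smul_eq_mul, mul_one], map_smul, smul_eq_mul]
  -- F is nonzero on some basis monomial
  have hdne : ∃ j0, j0 < 5 ∧ F (monomial (ee 4 j0) (1 : k)) ≠ 0 := by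
    by_contra hc
    push_neg at hc
    apply hFp
    rw [rep ((mem_homogeneousSubmodule _ _).mp hp), map_sum]
    refine Finset.sum_eq_zero fun j hj => ?_
    rw [show (monomial (ee 4 j)) (coeff (ee 4 j) p) = coeff (ee 4 j) p • monomial (ee 4 j) (1 : k)
      by rw [smul_monomial, smul_eq_mul, mul_one], map_smul,
      hc j (by have := Finset.mem_range.mp hj; omega), smul_zero]
  -- the coefficient matrix and its kernel
  set M : Matrix (Fin 3) (Fin 4) k :=
    Matrix.of fun (i : Fin 3) (j : Fin 4) => coeff (ee 3 (j : ℕ)) (h i) with hM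
  have hrows : LinearIndependent k M := by
    refine Fintype.linearIndependent_iff.mpr ?_
    intro g hg
    have hgj : ∀ (j : ℕ), j < 4 → ∑ i : Fin 3, g i * coeff (ee 3 j) (h i) = 0 := by
      intro j hj
      have h0 := congrFun hg (⟨j, hj⟩ : Fin 4)
      simp only [Finset.sum_apply, Pi.smul_apply, smul_eq_mul, Pi.zero_apply, hM,
        Matrix.of_apply] at h0
      exact h0
    refine Fintype.linearIndependent_iff.mp hli g ?_
    calc ∑ i : Fin 3, g i • h i
        = ∑ i : Fin 3, ∑ j ∈ Finset.range 4,
            (monomial (ee 3 j)) (g i * coeff (ee 3 j) (h i)) := by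
          refine Finset.sum_congr rfl fun i _ => ?_
          nth_rewrite 1 [rep (hdeg i)]
          rw [Finset.smul_sum]
          refine Finset.sum_congr rfl fun j _ => ?_
          rw [smul_monomial, smul_eq_mul]
      _ = ∑ j ∈ Finset.range 4, ∑ i : Fin 3,
            (monomial (ee 3 j)) (g i * coeff (ee 3 j) (h i)) := Finset.sum_comm
      _ = 0 := by
          refine Finset.sum_eq_zero fun j hj => ?_
          have h0 : ∑ i : Fin 3, g i * coeff (ee 3 j) (h i) = 0 :=
            hgj j (Finset.mem_range.mp hj)
          rw [← map_sum, h0, map_zero]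
  have hrank : Module.finrank k ↥(LinearMap.range M.mulVecLin) = 3 := by
    have hr := hrows.rank_matrix
    unfold Matrix.rank at hr
    simpa using hr
  have hker1 : Module.finrank k ↥(LinearMap.ker M.mulVecLin) = 1 := by
    have hrn := LinearMap.finrank_range_add_finrank_ker M.mulVecLin
    rw [hrank, Module.finrank_fin_fun] at hrn
    omega
  have hu : (fun j : Fin 4 => F (monomial (ee 4 (j : ℕ)) (1 : k)))
      ∈ LinearMap.ker M.mulVecLin := by
    rw [LinearMap.mem_ker]
    funext i
    have hs := hsum0 i
    rw [Finset.sum_range] at hs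
    simpa [hM, Matrix.mulVecLin_apply, Matrix.mulVec, dotProduct] using hs
  have hv : (fun j : Fin 4 => F (monomial (ee 4 ((j : ℕ) + 1)) (1 : k)))
      ∈ LinearMap.ker M.mulVecLin := by
    rw [LinearMap.mem_ker]
    funext i
    have hs := hsum1 i
    rw [Finset.sum_range] at hs
    simpa [hM, Matrix.mulVecLin_apply, Matrix.mulVec, dotProduct] using hs
  obtain ⟨w, hw0, hww⟩ := finrank_eq_one_iff'.mp hker1
  obtain ⟨α, hα⟩ := hww ⟨_, hu⟩
  obtain ⟨β, hβ⟩ := hww ⟨_, hv⟩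
  have hαv : ∀ j : Fin 4, α * (w : Fin 4 → k) j = F (monomial (ee 4 (j : ℕ)) (1 : k)) := by
    intro j
    have h0 := congrArg (fun z : ↥(LinearMap.ker M.mulVecLin) => (z : Fin 4 → k) j) hα
    simpa using h0
  have hβv : ∀ j : Fin 4, β * (w : Fin 4 → k) j = F (monomial (ee 4 ((j : ℕ) + 1)) (1 : k)) := by
    intro j
    have h0 := congrArg (fun z : ↥(LinearMap.ker M.mulVecLin) => (z : Fin 4 → k) j) hβ
    simpa using h0
  by_cases hα0 : α = 0
  · -- the coefficients of X1^3 all vanish, so X0 divides everything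
    have hd03 : ∀ j : ℕ, j < 4 → F (monomial (ee 4 j) (1 : k)) = 0 := by
      intro j hj
      have h0 := hαv ⟨j, hj⟩
      rw [hα0, zero_mul] at h0
      exact h0.symm
    have hd4 : F (monomial (ee 4 4) (1 : k)) ≠ 0 := by
      obtain ⟨j0, hj5, hj0⟩ := hdne
      rcases Nat.lt_or_ge j0 4 with hlt | hge
      · exact absurd (hd03 j0 hlt) hj0
      · have hj04 : j0 = 4 := by omega
        rwa [hj04] at hj0
    have ha3 : ∀ i, coeff (ee 3 3) (h i) = 0 := by
      intro i
      have hs := hsum1 i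
      rw [Finset.sum_range_succ, Finset.sum_range_succ, Finset.sum_range_succ,
        Finset.sum_range_succ, Finset.sum_range_zero, zero_add] at hs
      norm_num at hs
      rw [hd03 1 (by norm_num), hd03 2 (by norm_num), hd03 3 (by norm_num)] at hs
      simp only [mul_zero, zero_add] at hs
      exact (mul_eq_zero.mp hs).resolve_right hd4
    exact not_unit_X0 (hgcd _ fun i => dvd_X0 (hdeg i) (ha3 i))
  · by_cases hβ0 : β = 0
    · -- the coefficients of X0^3 all vanish, so X1 divides everything
      have hd14 : ∀ j : ℕ, 1 ≤ j → j < 5 → F (monomial (ee 4 j) (1 : k)) = 0 := by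
        intro j h1j hj5
        have h0 := hβv ⟨j - 1, by omega⟩
        rw [hβ0, zero_mul] at h0
        rw [show (((⟨j - 1, by omega⟩ : Fin 4) : ℕ) + 1) = j from by simp; omega] at h0
        exact h0.symm
      have hd0 : F (monomial (ee 4 0) (1 : k)) ≠ 0 := by
        obtain ⟨j0, hj5, hj0⟩ := hdne
        rcases Nat.eq_zero_or_pos j0 with rfl | hpos
        · exact hj0
        · exact absurd (hd14 j0 hpos hj5) hj0
      have ha0 : ∀ i, coeff (ee 3 0) (h i) = 0 := by
        intro i
        have hs := hsum0 i
        rw [Finset.sum_range_succ, Finset.sum_range_succ, Finset.sum_range_succ,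
          Finset.sum_range_succ, Finset.sum_range_zero, zero_add] at hs
        rw [hd14 1 (by norm_num) (by norm_num), hd14 2 (by norm_num) (by norm_num),
          hd14 3 (by norm_num) (by norm_num)] at hs
        simp only [mul_zero, add_zero] at hs
        exact (mul_eq_zero.mp hs).resolve_right hd0
      exact not_unit_X1 (hgcd _ fun i => dvd_X1 (hdeg i) (ha0 i))
    · -- the geometric progression case
      have hstep : ∀ j : ℕ, j < 4 → F (monomial (ee 4 (j + 1)) (1 : k)) =
          (β / α) * F (monomial (ee 4 j) (1 : k)) := by
        intro j hj
        have h1 := hαv ⟨j, hj⟩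
        have h2 := hβv ⟨j, hj⟩
        rw [← h2, ← h1]
        field_simp
      have h1 := hstep 0 (by norm_num)
      have h2 := hstep 1 (by norm_num)
      have h3 := hstep 2 (by norm_num)
      have h4 := hstep 3 (by norm_num)
      norm_num at h1 h2 h3 h4
      have hd0 : F (monomial (ee 4 0) (1 : k)) ≠ 0 := by
        obtain ⟨j0, hj5, hj0⟩ := hdne
        intro hz
        apply hj0
        interval_cases j0 <;> simp [h1, h2, h3, h4, hz]
      have hrel : ∀ i, coeff (ee 3 0) (h i) + (β / α) * coeff (ee 3 1) (h i) +
          (β / α) ^ 2 * coeff (ee 3 2) (h i) + (β / α) ^ 3 * coeff (ee 3 3) (h i) = 0 := by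
        intro i
        have hs := hsum0 i
        rw [Finset.sum_range_succ, Finset.sum_range_succ, Finset.sum_range_succ,
          Finset.sum_range_succ, Finset.sum_range_zero, zero_add] at hs
        rw [h3, h2, h1] at hs
        have hfac : (coeff (ee 3 0) (h i) + (β / α) * coeff (ee 3 1) (h i) +
            (β / α) ^ 2 * coeff (ee 3 2) (h i) + (β / α) ^ 3 * coeff (ee 3 3) (h i)) *
            F (monomial (ee 4 0) (1 : k)) = 0 := by linear_combination hs
        exact (mul_eq_zero.mp hfac).resolve_right hd0
      exact not_unit_lin (β / α) (hgcd _ fun i => dvd_lin (hdeg i) (β / α) (hrel i))
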